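/- Let ω be a primitive m-th root of unity (m ≥ 2). Then H_n(ω, ω^2, ..., ω^{m-1}) = ∏_{j < n, m ∤ j} (1 - q^j) if m divides n, and equals 0 otherwise. Here H_n is the Rogers-Szegő polynomial in m-1 variables. -/

import Mathlib

/-- `(q)_n = (1-q)(1-q^2)⋯(1-q^n)`, with `(q)_0 = 1`. -/
noncomputable def qPoch (q : ℂ) (n : ℕ) : ℂ :=
  ∏ j ∈ Finset.range n, (1 - q ^ (j + 1))

/-- The Rogers-Szegő polynomial in `m-1` variables. -/
noncomputable def rogersSzegoMV (q : ℂ) (m n : ℕ) (t : Fin (m - 1) → ℂ) : ℂ :=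
  ∑ k ∈ Finset.Nat.antidiagonalTuple m n,
    (qPoch q n / ∏ i, qPoch q (k i)) *
      ∏ i : Fin (m - 1), t i ^ k (Fin.castLE (Nat.sub_le m 1) i)

lemma qPoch_def (q : ℂ) (n : ℕ) : qPoch q n = ∏ j ∈ Finset.range n, (1 - q ^ (j + 1)) := rfl

lemma qPoch_zero (q : ℂ) : qPoch q 0 = 1 := by simp [qPoch]

lemma qPoch_succ (q : ℂ) (n : ℕ) : qPoch q (n + 1) = qPoch q n * (1 - q ^ (n + 1)) :=
  Finset.prod_range_succ _ _

lemma qPoch_ne_zero {q : ℂ} (hq : ∀ j : ℕ, 1 ≤ j → q ^ j ≠ 1) (n : ℕ) : qPoch q n ≠ 0 := by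
  refine Finset.prod_ne_zero_iff.2 fun j _ => ?_
  have := hq (j + 1) (by omega)
  intro h
  apply this
  have : (q : ℂ) ^ (j+1) = 1 := by linear_combination -h
  exact this

/-- q-exponential -/
noncomputable def qExp (q a : ℂ) : PowerSeries ℂ := PowerSeries.mk fun n => a ^ n / qPoch q n

lemma constantCoeff_qExp (q a : ℂ) : PowerSeries.constantCoeff (qExp q a) = 1 := by
  simp [qExp, ← PowerSeries.coeff_zero_eq_constantCoeff, qPoch_zero]

lemma qExp_mul {q : ℂ} (hq : ∀ j : ℕ, 1 ≤ j → q ^ j ≠ 1) (a : ℂ) :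
    qExp q a * (1 - PowerSeries.C a * PowerSeries.X) = qExp q (q * a) := by
  ext n
  rw [mul_sub, mul_one, map_sub, ← mul_assoc, mul_comm (qExp q a) (PowerSeries.C a), mul_assoc]
  rw [PowerSeries.coeff_C_mul]
  cases n with
  | zero => simp [qExp, qPoch_zero]
  | succ n =>
      rw [PowerSeries.coeff_succ_mul_X]
      simp only [qExp, PowerSeries.coeff_mk]
      rw [qPoch_succ]
      have h1 := qPoch_ne_zero hq n
      have h2 : (1 : ℂ) - q ^ (n+1) ≠ 0 := by
        intro h
        exact hq (n+1) (by omega) (by linear_combination -h)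
      field_simp
      ring

lemma rescale_qExp (q a : ℂ) : PowerSeries.rescale q (qExp q a) = qExp q (q * a) := by
  ext n
  simp [qExp, PowerSeries.coeff_rescale, mul_pow]
  ring

open Polynomial in
lemma poly_prod_roots {m : ℕ} (hm : 0 < m) {ω : ℂ} (hω : IsPrimitiveRoot ω m) :
    ∏ i ∈ Finset.range m, (1 - Polynomial.C (ω ^ (i + 1)) * Polynomial.X) =
      1 - Polynomial.X ^ m := by
  have hω0 : ω ≠ 0 := hω.ne_zero (by omega)
  have hinv : IsPrimitiveRoot ω⁻¹ m := hω.inv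
  have e : (ω⁻¹ : ℂ) ^ m = 1 := by rw [inv_pow, hω.pow_eq_one, inv_one]
  have key : (X ^ m - C (1:ℂ)) = ∏ i ∈ Finset.range m, (X - C ((ω⁻¹) ^ i * ω⁻¹)) :=
    X_pow_sub_C_eq_prod hinv hm e
  have factor : ∀ i, (1 - C (ω ^ (i+1)) * X : ℂ[X]) =
      (-C (ω ^ (i+1))) * (X - C ((ω⁻¹) ^ i * ω⁻¹)) := by
    intro i
    have : (ω ^ (i+1)) * ((ω⁻¹) ^ i * ω⁻¹) = 1 := by
      rw [← pow_succ, ← mul_pow, mul_inv_cancel₀ hω0, one_pow]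
    rw [neg_mul, mul_sub, ← map_mul, this, Polynomial.C_1]
    ring
  have h1 : ∏ i ∈ Finset.range m, (1 - C (ω ^ (i+1)) * X : ℂ[X]) =
      (∏ i ∈ Finset.range m, (-C (ω ^ (i+1)))) * (X ^ m - C (1:ℂ)) := by
    rw [key, ← Finset.prod_mul_distrib]
    exact Finset.prod_congr rfl fun i _ => factor i
  -- evaluate at 0 to find the constant
  have h0 := congrArg (Polynomial.eval 0) h1
  simp only [eval_prod, eval_sub, eval_one, eval_mul, eval_C, eval_X, mul_zero, sub_zero,
    eval_pow, eval_neg] at h0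
  rw [Finset.prod_const_one] at h0
  have hc : (∏ i ∈ Finset.range m, (-C (ω ^ (i+1)) : ℂ[X])) = -1 := by
    have : (∏ i ∈ Finset.range m, (-(ω ^ (i+1)) : ℂ)) = -1 := by
      have : (1 : ℂ) = (∏ i ∈ Finset.range m, (-(ω ^ (i+1)) : ℂ)) * (0 ^ m - 1) := by
        simpa using h0
      have hm0 : (0:ℂ) ^ m = 0 := zero_pow (by omega)
      rw [hm0] at this
      linear_combination this
    calc (∏ i ∈ Finset.range m, (-C (ω ^ (i+1)) : ℂ[X]))
        = C (∏ i ∈ Finset.range m, (-(ω ^ (i+1)) : ℂ)) := by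
          rw [map_prod]; exact Finset.prod_congr rfl fun i _ => by simp
      _ = -1 := by rw [this]; simp
  rw [h1, hc, Polynomial.C_1]
  ring

lemma ps_prod_roots {m : ℕ} (hm : 0 < m) {ω : ℂ} (hω : IsPrimitiveRoot ω m) :
    ∏ i ∈ Finset.range m, (1 - PowerSeries.C (ω ^ (i + 1)) * PowerSeries.X) =
      1 - (PowerSeries.X : PowerSeries ℂ) ^ m := by
  have := congrArg (Polynomial.coeToPowerSeries.ringHom (R := ℂ)) (poly_prod_roots hm hω)
  simpa [map_prod, map_sub, map_mul, map_pow, map_one] using this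

noncomputable def Pser (q : ℂ) (m : ℕ) (ω : ℂ) : PowerSeries ℂ :=
  ∏ i ∈ Finset.range m, qExp q (ω ^ (i + 1))

lemma Pser_rescale {q : ℂ} (hq : ∀ j : ℕ, 1 ≤ j → q ^ j ≠ 1) {m : ℕ} (hm : 0 < m)
    {ω : ℂ} (hω : IsPrimitiveRoot ω m) :
    PowerSeries.rescale q (Pser q m ω) = Pser q m ω * (1 - PowerSeries.X ^ m) := by
  rw [Pser, map_prod, ← ps_prod_roots hm hω, ← Finset.prod_mul_distrib]
  exact Finset.prod_congr rfl fun i _ => by rw [rescale_qExp, ← qExp_mul hq]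

lemma Pser_rec {q : ℂ} (hq : ∀ j : ℕ, 1 ≤ j → q ^ j ≠ 1) {m : ℕ} (hm : 0 < m)
    {ω : ℂ} (hω : IsPrimitiveRoot ω m) (n : ℕ) :
    PowerSeries.coeff n (Pser q m ω) * (1 - q ^ n) =
      if m ≤ n then PowerSeries.coeff (n - m) (Pser q m ω) else 0 := by
  have h := congrArg (PowerSeries.coeff n) (Pser_rescale hq hm hω)
  rw [PowerSeries.coeff_rescale, mul_sub, mul_one, map_sub,
    PowerSeries.coeff_mul_X_pow'] at h
  split
  · next hmn =>
      rw [if_pos hmn] at h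
      linear_combination -h
  · next hmn =>
      rw [if_neg hmn] at h
      linear_combination -h

lemma Pser_zero (q : ℂ) (m : ℕ) (ω : ℂ) :
    PowerSeries.coeff 0 (Pser q m ω) = 1 := by
  rw [PowerSeries.coeff_zero_eq_constantCoeff, Pser, map_prod]
  simp [constantCoeff_qExp]

lemma Pser_coeff {q : ℂ} (hq : ∀ j : ℕ, 1 ≤ j → q ^ j ≠ 1) {m : ℕ} (hm : 0 < m)
    {ω : ℂ} (hω : IsPrimitiveRoot ω m) (n : ℕ) :
    PowerSeries.coeff n (Pser q m ω) =
      if m ∣ n then (∏ k ∈ Finset.range (n / m), (1 - q ^ (m * (k + 1))))⁻¹ else 0 := by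
  induction n using Nat.strong_induction_on with
  | _ n ih =>
    rcases Nat.eq_zero_or_pos n with rfl | hn
    · simp [Pser_zero]
    have hne : (1 : ℂ) - q ^ n ≠ 0 := by
      intro h
      exact hq n (by omega) (by linear_combination -h)
    have hrec := Pser_rec hq hm hω n
    by_cases hmn : m ≤ n
    · rw [if_pos hmn, ih (n - m) (by omega)] at hrec
      by_cases hd : m ∣ n
      · have hd' : m ∣ (n - m) := Nat.dvd_sub hd (dvd_refl m)
        rw [if_pos hd'] at hrec
        rw [if_pos hd]
        have hdiv : n / m = (n - m) / m + 1 := by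
          rcases hd with ⟨c, rfl⟩
          have hc : 1 ≤ c := by
            rcases Nat.eq_zero_or_pos c with rfl | h
            · omega
            · exact h
          rw [Nat.mul_div_cancel_left _ hm]
          have h2 : m * c - m = m * (c - 1) := by
            rw [Nat.mul_sub, mul_one]
          rw [h2, Nat.mul_div_cancel_left _ hm]
          omega
        have hlast : m * ((n - m) / m + 1) = n := by
          rw [Nat.mul_add, mul_one, Nat.mul_div_cancel' hd']
          omega
        rw [hdiv, Finset.prod_range_succ, hlast, mul_inv, ← hrec,
          mul_assoc, mul_inv_cancel₀ hne, mul_one]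
      · have hd' : ¬ m ∣ (n - m) := fun h => hd (by
          have := Nat.dvd_add h (dvd_refl m)
          rwa [Nat.sub_add_cancel hmn] at this)
        rw [if_neg hd'] at hrec
        rw [if_neg hd]
        exact (mul_eq_zero.mp hrec).resolve_right hne
    · rw [if_neg hmn] at hrec
      have hd : ¬ m ∣ n := fun h => hmn (Nat.le_of_dvd hn h)
      rw [if_neg hd]
      exact (mul_eq_zero.mp hrec).resolve_right hne


lemma Pser_def (q : ℂ) (m : ℕ) (ω : ℂ) :
    Pser q m ω = ∏ i ∈ Finset.range m, qExp q (ω ^ (i + 1)) := rfl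

lemma qExp_def (q a : ℂ) (n : ℕ) :
    PowerSeries.coeff n (qExp q a) = a ^ n / qPoch q n := PowerSeries.coeff_mk _ _

/-- Pack a `Fin m`-tuple as a finsupp on `ℕ`. -/
noncomputable def tupFinsupp (m : ℕ) (k : Fin m → ℕ) : ℕ →₀ ℕ :=
  Finsupp.onFinset (Finset.range m) (fun j => if h : j < m then k ⟨j, h⟩ else 0)
    (fun j hj => by
      rw [Finset.mem_range]
      by_contra h
      exact hj (dif_neg h))

lemma tupFinsupp_apply (m : ℕ) (k : Fin m → ℕ) (i : Fin m) :
    tupFinsupp m k i.val = k i := by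
  simp only [tupFinsupp, Finsupp.onFinset_apply, dif_pos i.isLt]

lemma rogersSzego_eq_coeff {q : ℂ} (hq : ∀ j : ℕ, 1 ≤ j → q ^ j ≠ 1) {m : ℕ} (hm : 2 ≤ m)
    (n : ℕ) {ω : ℂ} (hω1 : ω ^ m = 1) :
    rogersSzegoMV q m n (fun i => ω ^ ((i : ℕ) + 1)) =
      qPoch q n * PowerSeries.coeff n (Pser q m ω) := by
  classical
  rw [Pser_def, PowerSeries.coeff_prod, Finset.mul_sum, rogersSzegoMV]
  refine Finset.sum_nbij' (i := fun k => tupFinsupp m k)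
    (j := fun l => fun i : Fin m => l i.val) ?_ ?_ ?_ ?_ ?_
  · intro k hk
    rw [Finset.Nat.mem_antidiagonalTuple] at hk
    rw [Finset.mem_finsuppAntidiag]
    refine ⟨?_, Finsupp.support_onFinset_subset⟩
    calc ∑ j ∈ Finset.range m, tupFinsupp m k j
        = ∑ i : Fin m, tupFinsupp m k i.val := (Fin.sum_univ_eq_sum_range _ m).symm
      _ = ∑ i : Fin m, k i := Finset.sum_congr rfl fun i _ => tupFinsupp_apply m k i
      _ = n := hk
  · intro l hl
    rw [Finset.mem_finsuppAntidiag] at hl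
    rw [Finset.Nat.mem_antidiagonalTuple]
    calc ∑ i : Fin m, l i.val = ∑ j ∈ Finset.range m, l j := Fin.sum_univ_eq_sum_range _ m
      _ = n := hl.1
  · intro k _
    funext i
    exact tupFinsupp_apply m k i
  · intro l hl
    rw [Finset.mem_finsuppAntidiag] at hl
    ext j
    simp only [tupFinsupp, Finsupp.onFinset_apply]
    by_cases h : j < m
    · rw [dif_pos h]
    · rw [dif_neg h]
      by_contra hne
      have : j ∈ l.support := Finsupp.mem_support_iff.2 fun h0 => hne h0.symm
      exact h (Finset.mem_range.1 (hl.2 this))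
  · intro k _
    simp only [qExp_def]
    rw [Finset.prod_div_distrib]
    have hB : (∏ j ∈ Finset.range m, qPoch q (tupFinsupp m k j)) =
        ∏ i : Fin m, qPoch q (k i) := by
      rw [← Fin.prod_univ_eq_prod_range (fun j => qPoch q (tupFinsupp m k j)) m]
      exact Finset.prod_congr rfl fun i _ => by rw [tupFinsupp_apply]
    have hW : (∏ j ∈ Finset.range m, (ω ^ (j + 1)) ^ (tupFinsupp m k j)) =
        ∏ i : Fin (m - 1), (ω ^ ((i : ℕ) + 1)) ^ k (Fin.castLE (Nat.sub_le m 1) i) := by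
      have hm1 : m - 1 + 1 = m := by omega
      have hrange : Finset.range m = Finset.range (m - 1 + 1) := by rw [hm1]
      rw [hrange, Finset.prod_range_succ]
      have hlast : (ω ^ (m - 1 + 1)) ^ (tupFinsupp m k (m - 1)) = 1 := by
        rw [hm1, hω1, one_pow]
      rw [hlast, mul_one]
      rw [← Fin.prod_univ_eq_prod_range (fun j => (ω ^ (j + 1)) ^ (tupFinsupp m k j)) (m - 1)]
      refine Finset.prod_congr rfl fun i _ => ?_
      have h1 : (i : ℕ) < m := by omega
      have h2 : tupFinsupp m k i.val = k (Fin.castLE (Nat.sub_le m 1) i) :=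
        tupFinsupp_apply m k ⟨i.val, h1⟩
      rw [h2]
    rw [hB, hW]
    have hBne : (∏ i : Fin m, qPoch q (k i)) ≠ 0 :=
      Finset.prod_ne_zero_iff.2 fun i _ => qPoch_ne_zero hq _
    field_simp
    try ring

lemma qPoch_split (q : ℂ) {m n : ℕ} (hm : 0 < m) (hd : m ∣ n) :
    qPoch q n =
      (∏ j ∈ (Finset.range n).filter (fun j => ¬ m ∣ j), (1 - q ^ j)) *
        ∏ k ∈ Finset.range (n / m), (1 - q ^ (m * (k + 1))) := by
  rw [qPoch_def, ← Finset.prod_filter_mul_prod_filter_not (Finset.range n) (fun j => ¬ m ∣ (j+1))]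
  congr 1
  · -- shift j ↦ j+1
    refine Finset.prod_nbij' (i := fun j => j + 1) (j := fun j => j - 1) ?_ ?_ ?_ ?_ ?_
    · intro j hj
      simp only [Finset.mem_filter, Finset.mem_range] at *
      refine ⟨?_, hj.2⟩
      rcases Nat.lt_or_ge (j + 1) n with h | h
      · exact h
      · exfalso
        have : j + 1 = n := by omega
        exact hj.2 (this ▸ hd)
    · intro j hj
      simp only [Finset.mem_filter, Finset.mem_range] at *
      have hj0 : j ≠ 0 := by
        rintro rfl
        exact hj.2 (dvd_zero m)
      have : j - 1 + 1 = j := by omega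
      refine ⟨by omega, ?_⟩
      rw [this]
      exact hj.2
    · intro j _
      show j + 1 - 1 = j
      omega
    · intro j hj
      simp only [Finset.mem_filter, Finset.mem_range] at hj
      have hj0 : j ≠ 0 := by
        rintro rfl
        exact hj.2 (dvd_zero m)
      show j - 1 + 1 = j
      omega
    · intro j _; rfl
  · -- multiples of m
    simp only [not_not]
    refine Finset.prod_nbij' (i := fun j => (j + 1) / m - 1) (j := fun k => m * (k + 1) - 1)
      ?_ ?_ ?_ ?_ ?_
    · intro j hj
      simp only [Finset.mem_filter, Finset.mem_range] at *
      obtain ⟨s, hs⟩ := hj.2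
      have hs1 : 1 ≤ s := by
        rcases Nat.eq_zero_or_pos s with rfl | h
        · omega
        · exact h
      rw [hs, Nat.mul_div_cancel_left _ hm]
      obtain ⟨c, hc⟩ := hd
      rw [hc, Nat.mul_div_cancel_left _ hm]
      -- m * s ≤ m * c, s ≥ 1 ⊢ s - 1 < c
      have hle : m * s ≤ m * c := by omega
      have := Nat.le_of_mul_le_mul_left hle hm
      omega
    · intro k hk
      simp only [Finset.mem_filter, Finset.mem_range] at *
      obtain ⟨c, hc⟩ := hd
      rw [hc, Nat.mul_div_cancel_left _ hm] at hk
      have h1 : m * (k + 1) ≤ m * c := Nat.mul_le_mul_left m (by omega)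
      have h2 : 0 < m * (k + 1) := by positivity
      refine ⟨by omega, ?_⟩
      have h3 : m * (k + 1) - 1 + 1 = m * (k + 1) := by omega
      rw [h3]
      exact Dvd.intro _ rfl
    · intro j hj
      simp only [Finset.mem_filter, Finset.mem_range] at hj
      obtain ⟨s, hs⟩ := hj.2
      have hs1 : 1 ≤ s := by
        rcases Nat.eq_zero_or_pos s with rfl | h
        · omega
        · exact h
      show m * ((j + 1) / m - 1 + 1) - 1 = j
      rw [hs, Nat.mul_div_cancel_left _ hm]
      have h3 : s - 1 + 1 = s := by omega
      rw [h3]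
      omega
    · intro k _
      have h2 : 0 < m * (k + 1) := by positivity
      show (m * (k + 1) - 1 + 1) / m - 1 = k
      have h3 : m * (k + 1) - 1 + 1 = m * (k + 1) := by omega
      rw [h3, Nat.mul_div_cancel_left _ hm]
      omega
    · intro j hj
      simp only [Finset.mem_filter, Finset.mem_range] at hj
      obtain ⟨s, hs⟩ := hj.2
      have hs1 : 1 ≤ s := by
        rcases Nat.eq_zero_or_pos s with rfl | h
        · omega
        · exact h
      show (1 : ℂ) - q ^ (j + 1) = 1 - q ^ (m * ((j + 1) / m - 1 + 1))
      rw [hs, Nat.mul_div_cancel_left _ hm]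
      have h3 : s - 1 + 1 = s := by omega
      rw [h3]

/-- For `ω` a primitive `m`-th root of unity (`m ≥ 2`) and a generic parameter `q`,
`H_n(ω, ω², …, ω^{m-1}) = ∏_{j<n, m∤j} (1 - q^j)` if `m ∣ n`, and `0` otherwise. -/
theorem rogersSzegoMV_at_roots_of_unity (m n : ℕ) (hm : 2 ≤ m) (ω : ℂ)
    (hω : IsPrimitiveRoot ω m) (q : ℂ) (hq : ∀ j : ℕ, 1 ≤ j → q ^ j ≠ 1) :
    rogersSzegoMV q m n (fun i => ω ^ ((i : ℕ) + 1)) =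
      if m ∣ n then
        ∏ j ∈ (Finset.range n).filter (fun j => ¬ m ∣ j), (1 - q ^ j)
      else 0 := by
  have hm0 : 0 < m := by omega
  rw [rogersSzego_eq_coeff hq hm n hω.pow_eq_one, Pser_coeff hq hm0 hω]
  by_cases hd : m ∣ n
  · rw [if_pos hd, if_pos hd, qPoch_split q hm0 hd]
    have hBne : (∏ k ∈ Finset.range (n / m), (1 - q ^ (m * (k + 1)))) ≠ 0 :=
      Finset.prod_ne_zero_iff.2 fun k _ h => by
        have h1 : 1 ≤ m * (k + 1) := by
          have : 0 < m * (k + 1) := by positivity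
          omega
        exact hq (m * (k + 1)) h1 (by linear_combination -h)
    rw [mul_assoc, mul_inv_cancel₀ hBne, mul_one]
  · rw [if_neg hd, if_neg hd, mul_zero]
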